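/- Let δ > 0 and set k_δ = ⌊log₂(π/δ)⌋ + 1. For all complex numbers λ, μ with |λ| = |μ| = 1 and |λ − μ| > δ, there exists a natural number k < k_δ such that |(λ · conj(μ))^(2^k) − 1| ≥ √2. -/

import Mathlib

lemma abs_exp_mul_I_sub_one_sq (x : ℝ) :
    ‖Complex.exp (x * Complex.I) - 1‖ ^ 2 = 2 - 2 * Real.cos x := by
  rw [Complex.sq_norm, Complex.exp_mul_I]
  simp [Complex.normSq_apply, Complex.cos_ofReal_re, Complex.sin_ofReal_re, Complex.cos_ofReal_im, Complex.sin_ofReal_im]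
  nlinarith [Real.sin_sq_add_cos_sq x]

theorem stmt2 (δ : ℝ) (hδ : 0 < δ) (lam mu : ℂ)
    (hlam : ‖lam‖ = 1) (hmu : ‖mu‖ = 1)
    (h : δ < ‖lam - mu‖) :
    ∃ k : ℕ, k < Nat.floor (Real.logb 2 (Real.pi / δ)) + 1 ∧
      Real.sqrt 2 ≤ ‖(lam * (starRingEnd ℂ) mu) ^ (2 ^ k) - 1‖ := by
  set z := lam * (starRingEnd ℂ) mu with hzdef
  have hz : ‖z‖ = 1 := by
    simp [hzdef, map_mul, Complex.norm_conj, hlam, hmu]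
  have hm : mu * (starRingEnd ℂ) mu = 1 := by
    rw [Complex.mul_conj]
    rw [Complex.normSq_eq_norm_sq, hmu]
    norm_num
  have hz1 : ‖z - 1‖ = ‖lam - mu‖ := by
    have : z - 1 = (lam - mu) * (starRingEnd ℂ) mu := by
      rw [sub_mul, ← hzdef, hm]
    rw [this, norm_mul, Complex.norm_conj, hmu, mul_one]
  set θ := z.arg with hθdef
  have hθpi : |θ| ≤ Real.pi := Complex.abs_arg_le_pi z
  have hzexp : z = Complex.exp (θ * Complex.I) := by
    conv_lhs => rw [← Complex.norm_mul_exp_arg_mul_I z]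
    rw [hz]
    simp [hθdef]
  -- |θ| > δ
  have habs1 : ‖z - 1‖ ^ 2 = 2 - 2 * Real.cos θ := by
    rw [hzexp] at *
    exact_mod_cast abs_exp_mul_I_sub_one_sq θ
  have hcosθ : Real.cos θ ≥ 1 - θ ^ 2 / 2 := Real.one_sub_sq_div_two_le_cos
  have hθδ : δ < |θ| := by
    by_contra hc
    push_neg at hc
    have h1 : 2 - 2 * Real.cos θ ≤ θ ^ 2 := by nlinarith
    have h2 : θ ^ 2 ≤ δ ^ 2 := by
      have := abs_nonneg θ
      nlinarith [sq_abs θ, sq_le_sq' (neg_le_of_abs_le hc) (le_of_abs_le hc)]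
    nlinarith [norm_nonneg (z - 1)]
  have hθpos : 0 < |θ| := lt_trans hδ hθδ
  -- find minimal k with π/2 ≤ 2^k * |θ|
  have hex : ∃ k : ℕ, Real.pi / 2 ≤ 2 ^ k * |θ| := by
    obtain ⟨k, hk⟩ := pow_unbounded_of_one_lt (Real.pi / (2 * |θ|)) one_lt_two
    refine ⟨k, ?_⟩
    rw [div_lt_iff₀ (by positivity)] at hk
    nlinarith [hk, hθpos]
  classical
  set k := Nat.find hex with hkdef
  have hkspec : Real.pi / 2 ≤ 2 ^ k * |θ| := Nat.find_spec hex
  have hkub : 2 ^ k * |θ| ≤ Real.pi := by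
    rcases Nat.eq_zero_or_pos k with hk0 | hkpos
    · rw [hk0]; simpa using hθpi
    · have hprev := Nat.find_min hex (Nat.sub_lt hkpos one_pos)
      push_neg at hprev
      have : (2 : ℝ) ^ k = 2 * 2 ^ (k - 1) := by
        rw [← pow_succ']
        congr 1
        omega
      rw [this]
      nlinarith [hprev]
  -- cos (2^k θ) ≤ 0
  have hcos : Real.cos ((2 ^ k : ℝ) * θ) ≤ 0 := by
    rw [← Real.cos_abs, abs_mul, abs_of_nonneg (by positivity : (0:ℝ) ≤ (2:ℝ)^k)]
    exact Real.cos_nonpos_of_pi_div_two_le_of_le hkspec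
      (le_trans hkub (by nlinarith [Real.pi_pos]))
  -- the norm bound
  have hpow : z ^ (2 ^ k) = Complex.exp ((((2 ^ k : ℝ) * θ : ℝ) : ℂ) * Complex.I) := by
    rw [hzexp, ← Complex.exp_nat_mul]
    congr 1
    push_cast
    ring
  have hsq : 2 ≤ ‖z ^ (2 ^ k) - 1‖ ^ 2 := by
    rw [hpow, abs_exp_mul_I_sub_one_sq]
    nlinarith
  refine ⟨k, ?_, ?_⟩
  · -- k bound
    rw [Nat.lt_succ_iff]
    have h2k : (2 : ℝ) ^ k < Real.pi / δ := by
      have h1 : (2 : ℝ) ^ k ≤ Real.pi / |θ| := by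
        rw [le_div_iff₀ hθpos]; exact hkub
      have h2 : Real.pi / |θ| < Real.pi / δ :=
        div_lt_div_of_pos_left Real.pi_pos hδ hθδ
      linarith
    refine Nat.le_floor ?_
    rw [Real.le_logb_iff_rpow_le (by norm_num) (by positivity)]
    rw [Real.rpow_natCast]
    linarith
  · calc Real.sqrt 2 ≤ Real.sqrt (‖z ^ (2 ^ k) - 1‖ ^ 2) :=
          Real.sqrt_le_sqrt hsq
      _ = ‖z ^ (2 ^ k) - 1‖ := Real.sqrt_sq (norm_nonneg _)
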